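/- Let (W,S) be an even Coxeter system with flag nerve L, t ∈ S, s ∈ S with 2 < m_{st} < ∞, and let T be a spherical subset of S containing {s,t}. Then every u ∈ T \ {s,t} satisfies m_{ut} = m_{us} = 2, i.e., u commutes with both s and t. -/

import Mathlib

open CoxeterSystem

/-- An even Coxeter system: every off-diagonal entry of the Coxeter matrix is
even or infinite (where `0` encodes `∞`). -/
def CoxeterMatrix.IsEven {B : Type*} (M : CoxeterMatrix B) : Prop :=
  ∀ i j : B, i ≠ j → M i j = 0 ∨ Even (M i j)

/-- The standard parabolic subgroup `W_V` generated by the simple reflections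
indexed by `V`. -/
def CoxeterSystem.parabolic {B W : Type*} [Group W] {M : CoxeterMatrix B}
    (cs : CoxeterSystem M W) (V : Set B) : Subgroup W :=
  Subgroup.closure (cs.simple '' V)

/-- `V ⊆ S` is spherical if the parabolic subgroup `W_V` is finite. -/
def CoxeterSystem.IsSpherical {B W : Type*} [Group W] {M : CoxeterMatrix B}
    (cs : CoxeterSystem M W) (V : Set B) : Prop :=
  (cs.parabolic V : Set W).Finite

/-- `S(w)`: the set of generators appearing in a reduced expression for `w`. -/
def CoxeterSystem.lettersOf {B W : Type*} [Group W] {M : CoxeterMatrix B}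
    (cs : CoxeterSystem M W) (w : W) : Set B :=
  {i | ∃ ω : List B, cs.IsReduced ω ∧ cs.wordProd ω = w ∧ i ∈ ω}

/-- The nerve of the Coxeter system is a flag complex: any finite set of
pairwise spherical vertices is spherical. -/
def CoxeterSystem.HasFlagNerve {B W : Type*} [Group W] {M : CoxeterMatrix B}
    (cs : CoxeterSystem M W) : Prop :=
  ∀ T : Finset B, (∀ i ∈ T, ∀ j ∈ T, i ≠ j → cs.IsSpherical {i, j}) →
    cs.IsSpherical (T : Set B)

lemma mul_pow_rev {G : Type*} [Group G] {a b : G} {n : ℕ} (h : (a*b)^n = 1) : (b*a)^n = 1 := by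
  have key : b * a = a⁻¹ * (a*b) * a⁻¹⁻¹ := by group
  rw [key, conj_pow, h]
  group

lemma invol_pow {G : Type*} [Group G] {x : G} (hx : x*x = 1) {n : ℕ} (hn : Even n) : x^n = 1 := by
  obtain ⟨k, rfl⟩ := hn
  have h2 : x^2 = 1 := by rwa [pow_two]
  rw [← two_mul, pow_mul, h2, one_pow]

lemma aux_finOrder {B W : Type*} [Group W] {M : CoxeterMatrix B}
    (cs : CoxeterSystem M W) {T : Set B} (hT : cs.IsSpherical T)
    {G : Type*} [Group G] {f : B → G} (hf : M.IsLiftable f)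
    {g : G} (hg : g ∈ Subgroup.closure (f '' T)) : IsOfFinOrder g := by
  by_contra hfo
  set φ := cs.lift ⟨f, hf⟩ with hφ
  have himg : Subgroup.closure (f '' T) ≤ Subgroup.map φ (cs.parabolic T) := by
    rw [Subgroup.closure_le]
    rintro x ⟨i, hi, rfl⟩
    exact ⟨cs.simple i, Subgroup.subset_closure ⟨i, hi, rfl⟩, cs.lift_apply_simple hf i⟩
  have hfin : ((Subgroup.map φ (cs.parabolic T) : Subgroup G) : Set G).Finite := by
    rw [Subgroup.coe_map]
    exact Set.Finite.image φ hT
  have hinf := Set.infinite_of_injective_forall_mem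
    (injective_pow_iff_not_isOfFinOrder.mpr hfo)
    (fun n : ℕ => Subgroup.pow_mem _ (himg hg) n)
  exact hinf hfin

lemma no_triangle {B W : Type*} [Group W] {M : CoxeterMatrix B} (cs : CoxeterSystem M W)
    (heven : M.IsEven) {T : Set B} (hT : cs.IsSpherical T) {s t u : B}
    (hsT : s ∈ T) (htT : t ∈ T) (huT : u ∈ T)
    (hst : s ≠ t) (hsu : s ≠ u) (htu : t ≠ u)
    {G : Type*} [Group G] (X Y Z g : G)
    (hX : X*X = 1) (hY : Y*Y = 1) (hZ : Z*Z = 1)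
    (hXY : (X*Y)^(M s t) = 1) (hXZ : (X*Z)^(M s u) = 1) (hYZ : (Y*Z)^(M t u) = 1)
    (hmem : g ∈ Subgroup.closure {X, Y, Z}) (hg : ¬ IsOfFinOrder g) : False := by
  classical
  set f : B → G := fun i => if i = s then X else if i = t then Y else if i = u then Z else 1
    with hf
  have hfs : f s = X := by simp [hf]
  have hft : f t = Y := by simp [hf, Ne.symm hst]
  have hfu : f u = Z := by simp [hf, Ne.symm hsu, Ne.symm htu]
  have hfo : ∀ i, i ≠ s → i ≠ t → i ≠ u → f i = 1 := by
    intro i h1 h2 h3; simp [hf, h1, h2, h3]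
  have hinv : ∀ i, f i * f i = 1 := by
    intro i
    by_cases h1 : i = s; · rw [h1, hfs]; exact hX
    by_cases h2 : i = t; · rw [h2, hft]; exact hY
    by_cases h3 : i = u; · rw [h3, hfu]; exact hZ
    rw [hfo i h1 h2 h3, one_mul]
  have hlift : M.IsLiftable f := by
    intro i j
    rcases eq_or_ne i j with rfl | hij
    · rw [M.diagonal, pow_one]; exact hinv i
    rcases heven i j hij with h0 | hEv
    · rw [h0, pow_zero]
    have hpow1 : ∀ x : G, (x*x = 1) → (x * (1:G))^(M i j) = 1 := by
      intro x hx; rw [mul_one]; exact invol_pow hx hEv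
    have hpow2 : ∀ x : G, (x*x = 1) → ((1:G) * x)^(M i j) = 1 := by
      intro x hx; rw [one_mul]; exact invol_pow hx hEv
    by_cases his : i = s
    · subst his
      by_cases hjt : j = t; · rw [hjt, hfs, hft]; exact hXY
      by_cases hju : j = u; · rw [hju, hfs, hfu]; exact hXZ
      rw [hfs, hfo j (Ne.symm hij) hjt hju]; exact hpow1 X hX
    by_cases hit : i = t
    · subst hit
      by_cases hjs : j = s
      · rw [hjs, hft, hfs, M.symmetric]; exact mul_pow_rev hXY
      by_cases hju : j = u; · rw [hju, hft, hfu]; exact hYZ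
      rw [hft, hfo j hjs (Ne.symm hij) hju]; exact hpow1 Y hY
    by_cases hiu : i = u
    · subst hiu
      by_cases hjs : j = s
      · rw [hjs, hfu, hfs, M.symmetric]; exact mul_pow_rev hXZ
      by_cases hjt : j = t
      · rw [hjt, hfu, hft, M.symmetric]; exact mul_pow_rev hYZ
      rw [hfu, hfo j hjs hjt (Ne.symm hij)]; exact hpow1 Z hZ
    · rw [hfo i his hit hiu]
      by_cases hjs : j = s; · subst hjs; rw [hfs]; exact hpow2 X hX
      by_cases hjt : j = t; · subst hjt; rw [hft]; exact hpow2 Y hY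
      by_cases hju : j = u; · subst hju; rw [hfu]; exact hpow2 Z hZ
      rw [hfo j hjs hjt hju, one_mul, one_pow]
  have hsub : ({X, Y, Z} : Set G) ⊆ f '' T := by
    rintro x (rfl | rfl | rfl)
    · exact ⟨s, hsT, hfs⟩
    · exact ⟨t, htT, hft⟩
    · exact ⟨u, huT, hfu⟩
  exact hg (aux_finOrder cs hT hlift
    (Subgroup.closure_mono hsub hmem))

namespace St6
open Matrix

open Matrix

abbrev M3 := Matrix (Fin 3) (Fin 3) ℚ
abbrev G3 := GL (Fin 3) ℚ

def mk3 (A : M3) (h : A * A = 1) : G3 := ⟨A, A, h, h⟩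

def AU3 : G3 := mk3 !![1,0,0;0,-1,0;0,0,1] (by simp [Matrix.mul_fin_three, Matrix.one_fin_three])
def BU3 : G3 := mk3 !![0,1,0;1,0,0;0,0,1] (by simp [Matrix.mul_fin_three, Matrix.one_fin_three])
def CU3 : G3 := mk3 !![0,-1,1;-1,0,1;0,0,1] (by simp [Matrix.mul_fin_three, Matrix.one_fin_three])
def A0 : G3 := mk3 !![-1,0,0;0,1,0;0,0,1] (by simp [Matrix.mul_fin_three, Matrix.one_fin_three])
def C0 : G3 := mk3 !![-1,0,2;0,1,0;0,0,1] (by simp [Matrix.mul_fin_three, Matrix.one_fin_three])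

lemma AU3_sq : AU3 * AU3 = 1 := by
  apply Units.ext; simp [AU3, mk3, Units.val_mul, Matrix.mul_fin_three, Matrix.one_fin_three]
lemma BU3_sq : BU3 * BU3 = 1 := by
  apply Units.ext; simp [BU3, mk3, Units.val_mul, Matrix.mul_fin_three, Matrix.one_fin_three]
lemma CU3_sq : CU3 * CU3 = 1 := by
  apply Units.ext; simp [CU3, mk3, Units.val_mul, Matrix.mul_fin_three, Matrix.one_fin_three]
lemma A0_sq : A0 * A0 = 1 := by
  apply Units.ext; simp [A0, mk3, Units.val_mul, Matrix.mul_fin_three, Matrix.one_fin_three]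
lemma C0_sq : C0 * C0 = 1 := by
  apply Units.ext; simp [C0, mk3, Units.val_mul, Matrix.mul_fin_three, Matrix.one_fin_three]

lemma AB4 : (AU3 * BU3)^4 = 1 := by
  apply Units.ext
  rw [Units.val_pow_eq_pow_val]
  simp [AU3, BU3, mk3, Units.val_mul, pow_succ, Matrix.mul_fin_three, Matrix.one_fin_three]

lemma AC4 : (AU3 * CU3)^4 = 1 := by
  apply Units.ext
  rw [Units.val_pow_eq_pow_val]
  simp [AU3, CU3, mk3, Units.val_mul, pow_succ, Matrix.mul_fin_three, Matrix.one_fin_three]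

lemma BC2 : (BU3 * CU3) * (BU3 * CU3) = 1 := by
  apply Units.ext
  simp [BU3, CU3, mk3, Units.val_mul, Matrix.mul_fin_three, Matrix.one_fin_three]

def gE : G3 := (AU3 * BU3)^2 * (AU3 * CU3)^2

lemma gE_pow (n : ℕ) : ((gE^n : G3) : M3) = !![1,0,-2*(n:ℚ);0,1,0;0,0,1] := by
  induction n with
  | zero => simp [Matrix.one_fin_three]
  | succ k ih =>
    rw [pow_succ, Units.val_mul, ih]
    simp [gE, AU3, BU3, CU3, mk3, Units.val_mul, pow_succ, Matrix.mul_fin_three]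
    norm_num
    ring

lemma gE_infinite : ¬ IsOfFinOrder gE := by
  rw [isOfFinOrder_iff_pow_eq_one]
  rintro ⟨n, hn, hone⟩
  have h2 : ((gE^n : G3) : M3) = ((1 : G3) : M3) := congrArg Units.val hone
  rw [gE_pow n] at h2
  have := congrFun (congrFun h2 0) 2
  norm_num [Matrix.one_fin_three] at this
  simp [Matrix.cons_val] at this
  omega

def g0 : G3 := A0 * C0

lemma g0_pow (n : ℕ) : ((g0^n : G3) : M3) = !![1,0,-2*(n:ℚ);0,1,0;0,0,1] := by
  induction n with
  | zero => simp [Matrix.one_fin_three]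
  | succ k ih =>
    rw [pow_succ, Units.val_mul, ih]
    simp [g0, A0, C0, mk3, Units.val_mul, Matrix.mul_fin_three]
    norm_num
    ring

lemma g0_infinite : ¬ IsOfFinOrder g0 := by
  rw [isOfFinOrder_iff_pow_eq_one]
  rintro ⟨n, hn, hone⟩
  have h2 : ((g0^n : G3) : M3) = ((1 : G3) : M3) := congrArg Units.val hone
  rw [g0_pow n] at h2
  have := congrFun (congrFun h2 0) 2
  norm_num [Matrix.one_fin_three] at this
  simp [Matrix.cons_val] at this
  omega

lemma euclid (P1 P2 r : ℕ) (h1 : 4 ∣ P1) (h2 : 4 ∣ P2) (hr : Even r) :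
    ∃ (G : Type) (_ : Group G) (X Y Z g : G),
      X*X = 1 ∧ Y*Y = 1 ∧ Z*Z = 1 ∧ (X*Y)^P1 = 1 ∧ (X*Z)^P2 = 1 ∧ (Y*Z)^r = 1 ∧
      g ∈ Subgroup.closure {X, Y, Z} ∧ ¬ IsOfFinOrder g := by
  refine ⟨G3, inferInstance, AU3, BU3, CU3, gE, AU3_sq, BU3_sq, CU3_sq, ?_, ?_, ?_, ?_, gE_infinite⟩
  · obtain ⟨k, rfl⟩ := h1
    rw [pow_mul, AB4, one_pow]
  · obtain ⟨k, rfl⟩ := h2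
    rw [pow_mul, AC4, one_pow]
  · exact invol_pow BC2 hr
  · have hX : AU3 ∈ Subgroup.closure {AU3, BU3, CU3} := Subgroup.subset_closure (by simp)
    have hY : BU3 ∈ Subgroup.closure {AU3, BU3, CU3} := Subgroup.subset_closure (by simp)
    have hZ : CU3 ∈ Subgroup.closure {AU3, BU3, CU3} := Subgroup.subset_closure (by simp)
    exact mul_mem (pow_mem (mul_mem hX hY) _) (pow_mem (mul_mem hX hZ) _)

lemma dihedral (a b : ℕ) (ha : Even a) (hb : Even b) :
    ∃ (G : Type) (_ : Group G) (X Y Z g : G),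
      X*X = 1 ∧ Y*Y = 1 ∧ Z*Z = 1 ∧ (X*Y)^a = 1 ∧ (X*Z)^0 = 1 ∧ (Y*Z)^b = 1 ∧
      g ∈ Subgroup.closure {X, Y, Z} ∧ ¬ IsOfFinOrder g := by
  refine ⟨G3, inferInstance, A0, 1, C0, g0, A0_sq, (by simp), C0_sq, ?_, pow_zero _, ?_, ?_, g0_infinite⟩
  · rw [mul_one]; exact invol_pow A0_sq ha
  · rw [one_mul]; exact invol_pow C0_sq hb
  · have hX : A0 ∈ Subgroup.closure {A0, (1:G3), C0} := Subgroup.subset_closure (by simp)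
    have hZ : C0 ∈ Subgroup.closure {A0, (1:G3), C0} := Subgroup.subset_closure (by simp)
    exact mul_mem hX hZ


open Real
noncomputable section


abbrev M2 := Matrix (Fin 2) (Fin 2) ℝ
abbrev G2 := GL (Fin 2) ℝ

/-- rotation unit -/
def rotU (θ : ℝ) : G2 :=
  ⟨!![cos θ, sin θ; -sin θ, cos θ], !![cos θ, -sin θ; sin θ, cos θ],
    by ext i j; fin_cases i <;> fin_cases j <;>
      simp [Matrix.mul_apply, Fin.sum_univ_two, Matrix.one_apply] <;> nlinarith [sin_sq_add_cos_sq θ],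
    by ext i j; fin_cases i <;> fin_cases j <;>
      simp [Matrix.mul_apply, Fin.sum_univ_two, Matrix.one_apply] <;> nlinarith [sin_sq_add_cos_sq θ]⟩

@[simp] lemma rotU_val (θ : ℝ) : (rotU θ).val = !![cos θ, sin θ; -sin θ, cos θ] := rfl

lemma rot_mul (a b : ℝ) : rotU a * rotU b = rotU (a + b) := by
  apply Units.ext
  rw [Units.val_mul, rotU_val, rotU_val, rotU_val]
  ext i j
  fin_cases i <;> fin_cases j <;>
    simp [Matrix.mul_apply, Fin.sum_univ_two, cos_add, sin_add] <;> ring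

lemma rot_zero : rotU 0 = 1 := by
  apply Units.ext
  simp [Matrix.one_fin_two]

lemma rot_pi : rotU π = -1 := by
  apply Units.ext
  rw [Units.val_neg, Units.val_one]
  ext i j; fin_cases i <;> fin_cases j <;> simp [Matrix.one_apply]

lemma rot_pow (θ : ℝ) (n : ℕ) : (rotU θ)^n = rotU (n * θ) := by
  induction n with
  | zero => simpa using rot_zero.symm
  | succ k ih => rw [pow_succ, ih, rot_mul]; congr 1; push_cast; ring

/-- the reflection diag(1,-1) -/
def AU : G2 :=
  ⟨!![1,0;0,-1], !![1,0;0,-1],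
    by ext i j; fin_cases i <;> fin_cases j <;> simp [Matrix.mul_apply, Fin.sum_univ_two, Matrix.one_apply],
    by ext i j; fin_cases i <;> fin_cases j <;> simp [Matrix.mul_apply, Fin.sum_univ_two, Matrix.one_apply]⟩

@[simp] lemma AU_val : (AU).val = !![1,0;0,-1] := rfl

/-- diagonal unit diag(y,1) -/
def TU (y : ℝ) (hy : y ≠ 0) : G2 :=
  ⟨!![y,0;0,1], !![y⁻¹,0;0,1],
    by ext i j; fin_cases i <;> fin_cases j <;>
      simp [Matrix.mul_apply, Fin.sum_univ_two, Matrix.one_apply, hy],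
    by ext i j; fin_cases i <;> fin_cases j <;>
      simp [Matrix.mul_apply, Fin.sum_univ_two, Matrix.one_apply, hy]⟩

@[simp] lemma TU_val (y : ℝ) (hy : y ≠ 0) : (TU y hy).val = !![y,0;0,1] := rfl
@[simp] lemma TU_inv_val (y : ℝ) (hy : y ≠ 0) : ((TU y hy)⁻¹).val = !![y⁻¹,0;0,1] := rfl

lemma AU_sq : AU * AU = 1 := by
  apply Units.ext
  rw [Units.val_mul]
  ext i j; fin_cases i <;> fin_cases j <;>
    simp [Matrix.mul_apply, Fin.sum_univ_two, Matrix.one_apply]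

lemma A_rot_A (θ : ℝ) : AU * rotU θ * AU = rotU (-θ) := by
  apply Units.ext
  rw [Units.val_mul, Units.val_mul]
  ext i j; fin_cases i <;> fin_cases j <;>
    simp [Matrix.mul_apply, Fin.sum_univ_two]

lemma A_T_comm (y : ℝ) (hy : y ≠ 0) : AU * TU y hy = TU y hy * AU := by
  apply Units.ext
  rw [Units.val_mul, Units.val_mul]
  ext i j; fin_cases i <;> fin_cases j <;>
    simp [Matrix.mul_apply, Fin.sum_univ_two]


lemma sq_neg_one {a b c d : ℝ} (h1 : a + d = 0) (h2 : a*d - b*c = 1) :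
    !![a,b;c,d] * !![a,b;c,d] = (-1 : M2) := by
  ext i j
  fin_cases i <;> fin_cases j <;>
    simp [Matrix.mul_apply, Fin.sum_univ_two, Matrix.one_apply]
  · linear_combination -h2 + a*h1
  · linear_combination b*h1
  · linear_combination c*h1
  · linear_combination -h2 + d*h1

lemma diag_pow2 (a b : ℝ) (n : ℕ) : (!![a,0;0,b] : M2)^n = !![a^n,0;0,b^n] := by
  induction n with
  | zero => simp [Matrix.one_fin_two]
  | succ k ih =>
    rw [pow_succ, ih]
    ext i j
    fin_cases i <;> fin_cases j <;> simp [Matrix.mul_apply, Fin.sum_univ_two, pow_succ]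

lemma rot_neg_pi : rotU (-π) = -1 := by
  apply Units.ext
  rw [Units.val_neg, Units.val_one]
  ext i j; fin_cases i <;> fin_cases j <;> simp [Matrix.one_apply]

def SU : G2 :=
  ⟨!![0,1;1,0], !![0,1;1,0],
    by ext i j; fin_cases i <;> fin_cases j <;> simp [Matrix.mul_apply, Fin.sum_univ_two, Matrix.one_apply],
    by ext i j; fin_cases i <;> fin_cases j <;> simp [Matrix.mul_apply, Fin.sum_univ_two, Matrix.one_apply]⟩

lemma neg_one_mem_center : (-1 : G2) ∈ Subgroup.center G2 :=
  Subgroup.mem_center_iff.mpr fun g => by simp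

lemma hAr (θ : ℝ) : AU * rotU θ = rotU (-θ) * AU := by
  rw [← A_rot_A θ, mul_assoc, AU_sq, mul_one]

lemma conjrot_val (y : ℝ) (hy : y ≠ 0) (θ : ℝ) :
    (TU y hy * rotU θ * (TU y hy)⁻¹).val = !![cos θ, y * sin θ; -(y⁻¹ * sin θ), cos θ] := by
  rw [Units.val_mul, Units.val_mul, TU_val, TU_inv_val, rotU_val]
  ext i j
  fin_cases i <;> fin_cases j <;>
    simp [Matrix.mul_apply, Fin.sum_univ_two] <;> field_simp

lemma BC_val (y : ℝ) (hy : y ≠ 0) (φ ψ : ℝ) :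
    (rotU (-φ) * (TU y hy * rotU (-ψ) * (TU y hy)⁻¹)).val =
    !![cos φ * cos ψ - sin φ * (sin ψ * y⁻¹), -(cos φ * (y * sin ψ)) - sin φ * cos ψ;
       sin φ * cos ψ + cos φ * (sin ψ * y⁻¹), cos φ * cos ψ - sin φ * (y * sin ψ)] := by
  rw [Units.val_mul, conjrot_val, rotU_val]
  ext i j
  fin_cases i <;> fin_cases j <;>
    simp [Matrix.mul_apply, Fin.sum_univ_two, -mul_eq_mul_left_iff, -mul_eq_mul_right_iff] <;>
    ring

lemma w_val (y : ℝ) (hy : y ≠ 0) :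
    (rotU (π/2) * (TU y hy * rotU (-(π/2)) * (TU y hy)⁻¹)).val = !![y⁻¹,0;0,y] := by
  rw [Units.val_mul, conjrot_val, rotU_val]
  ext i j
  fin_cases i <;> fin_cases j <;>
    simp [Matrix.mul_apply, Fin.sum_univ_two]

set_option maxHeartbeats 1000000 in
lemma hyper (P1 P2 r : ℕ) (h1 : 4 ≤ P1) (h2 : 4 ≤ P2)
    (he1 : Even P1) (he2 : Even P2) (hr : Even r)
    (hlt : (P1:ℝ)⁻¹ + (P2:ℝ)⁻¹ < 2⁻¹) :
    ∃ (G : Type) (_ : Group G) (X Y Z g : G),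
      X*X = 1 ∧ Y*Y = 1 ∧ Z*Z = 1 ∧ (X*Y)^P1 = 1 ∧ (X*Z)^P2 = 1 ∧ (Y*Z)^r = 1 ∧
      g ∈ Subgroup.closure {X, Y, Z} ∧ ¬ IsOfFinOrder g := by
  obtain ⟨k1, hk1⟩ := he1
  obtain ⟨k2, hk2⟩ := he2
  have hP1R : (4:ℝ) ≤ (P1:ℝ) := by exact_mod_cast h1
  have hP2R : (4:ℝ) ≤ (P2:ℝ) := by exact_mod_cast h2
  have hP1pos : (0:ℝ) < P1 := by linarith
  have hP2pos : (0:ℝ) < P2 := by linarith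
  have hP1ne : (P1:ℝ) ≠ 0 := ne_of_gt hP1pos
  have hP2ne : (P2:ℝ) ≠ 0 := ne_of_gt hP2pos
  have hk1ne : (k1:ℝ) ≠ 0 := Nat.cast_ne_zero.mpr (by omega)
  have hk2ne : (k2:ℝ) ≠ 0 := Nat.cast_ne_zero.mpr (by omega)
  have hk1R : (P1:ℝ) = 2 * k1 := by rw [hk1]; push_cast; ring
  have hk2R : (P2:ℝ) = 2 * k2 := by rw [hk2]; push_cast; ring
  set φ : ℝ := π / P1 with hφdef
  set ψ : ℝ := π / P2 with hψdef
  have hφpos : 0 < φ := div_pos pi_pos hP1pos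
  have hψpos : 0 < ψ := div_pos pi_pos hP2pos
  have hφlt : φ < π/2 := by
    rw [hφdef]
    exact div_lt_div_of_pos_left pi_pos (by norm_num) (by linarith)
  have hψlt : ψ < π/2 := by
    rw [hψdef]
    exact div_lt_div_of_pos_left pi_pos (by norm_num) (by linarith)
  have hs1 : 0 < sin φ := sin_pos_of_pos_of_lt_pi hφpos (by linarith [pi_pos])
  have hs2 : 0 < sin ψ := sin_pos_of_pos_of_lt_pi hψpos (by linarith [pi_pos])
  have hc1 : 0 < cos φ := cos_pos_of_mem_Ioo ⟨by linarith [pi_pos], hφlt⟩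
  have hc2 : 0 < cos ψ := cos_pos_of_mem_Ioo ⟨by linarith [pi_pos], hψlt⟩
  have hsum : φ + ψ < π/2 := by
    have h' : φ + ψ = π * ((P1:ℝ)⁻¹ + (P2:ℝ)⁻¹) := by
      rw [hφdef, hψdef]; field_simp
    have h'' := mul_lt_mul_of_pos_left hlt pi_pos
    rw [h']; nlinarith [h'']
  have hcc : sin φ * sin ψ < cos φ * cos ψ := by
    have hpos : 0 < cos (φ + ψ) := cos_pos_of_mem_Ioo ⟨by linarith [pi_pos], hsum⟩
    rw [cos_add] at hpos; linarith
  set x₀ : ℝ := 2*(cos φ*cos ψ)/(sin φ*sin ψ) with hx₀def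
  have hss : 0 < sin φ * sin ψ := mul_pos hs1 hs2
  have hx₀ : 2 < x₀ := by
    rw [hx₀def, lt_div_iff₀ hss]; linarith
  have hx' : sin φ * sin ψ * x₀ = 2*(cos φ * cos ψ) := by
    rw [hx₀def]; field_simp
  clear_value x₀
  set sv : ℝ := Real.sqrt (x₀^2 - 4) with hsvdef
  have hsv0 : 0 ≤ sv := Real.sqrt_nonneg _
  have hsvsq : sv^2 = x₀^2 - 4 := Real.sq_sqrt (by nlinarith)
  clear_value sv
  set y : ℝ := (x₀ + sv)/2 with hydef
  have hy1 : 1 < y := by rw [hydef]; linarith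
  have hy0 : y ≠ 0 := by linarith
  have hz : y * y⁻¹ = 1 := mul_inv_cancel₀ hy0
  have heq : y * y - x₀ * y + 1 = 0 := by
    rw [hydef]; linear_combination (1/4 : ℝ) * hsvsq
  clear_value y
  have hzeq : y⁻¹ = x₀ - y :=
    inv_eq_of_mul_eq_one_right (a := y) (b := x₀ - y) (by linear_combination -heq)
  have htr : 2*(cos φ*cos ψ) = sin φ * sin ψ * (y + y⁻¹) := by
    rw [hzeq, show y + (x₀ - y) = x₀ by ring]
    exact hx'.symm
  -- units
  set T : G2 := TU y hy0 with hTdef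
  set Bu : G2 := AU * rotU φ with hBdef
  set Cu : G2 := T * (AU * rotU (-ψ)) * T⁻¹ with hCdef
  have hBB : Bu * Bu = 1 := by
    rw [hBdef, show AU * rotU φ * (AU * rotU φ) = AU * rotU φ * AU * rotU φ by group,
      A_rot_A, rot_mul, neg_add_cancel, rot_zero]
  have hDD : AU * rotU (-ψ) * (AU * rotU (-ψ)) = 1 := by
    rw [show AU * rotU (-ψ) * (AU * rotU (-ψ)) = AU * rotU (-ψ) * AU * rotU (-ψ) by group,
      A_rot_A, neg_neg, rot_mul, add_neg_cancel, rot_zero]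
  have hCC : Cu * Cu = 1 := by
    rw [hCdef, show T * (AU * rotU (-ψ)) * T⁻¹ * (T * (AU * rotU (-ψ)) * T⁻¹)
      = T * (AU * rotU (-ψ) * (AU * rotU (-ψ))) * T⁻¹ by group, hDD]
    group
  have hAB : AU * Bu = rotU φ := by
    rw [hBdef, ← mul_assoc, AU_sq, one_mul]
  have hAC : AU * Cu = T * rotU (-ψ) * T⁻¹ := by
    rw [hCdef, show AU * (T * (AU * rotU (-ψ)) * T⁻¹) = (AU * T) * AU * rotU (-ψ) * T⁻¹ by group,
      A_T_comm, show T * AU * AU * rotU (-ψ) * T⁻¹ = T * (AU * AU) * rotU (-ψ) * T⁻¹ by group,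
      AU_sq]
    group
  have hBC : Bu * Cu = rotU (-φ) * (T * rotU (-ψ) * T⁻¹) := by
    rw [hBdef, hCdef, hAr φ,
      show rotU (-φ) * AU * (T * (AU * rotU (-ψ)) * T⁻¹)
        = rotU (-φ) * ((AU * T) * AU * rotU (-ψ) * T⁻¹) by group,
      A_T_comm, show rotU (-φ) * (T * AU * AU * rotU (-ψ) * T⁻¹)
        = rotU (-φ) * (T * (AU * AU) * rotU (-ψ) * T⁻¹) by group, AU_sq]
    group
  have hNval : (Bu * Cu).val =
      !![cos φ * cos ψ - sin φ * (sin ψ * y⁻¹), -(cos φ * (y * sin ψ)) - sin φ * cos ψ;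
         sin φ * cos ψ + cos φ * (sin ψ * y⁻¹), cos φ * cos ψ - sin φ * (y * sin ψ)] := by
    rw [hBC, hTdef]
    exact BC_val y hy0 φ ψ
  have hBC2 : (Bu * Cu)^2 = -1 := by
    apply Units.ext
    rw [Units.val_pow_eq_pow_val, pow_two, hNval, Units.val_neg, Units.val_one]
    have p1 : sin φ ^ 2 + cos φ ^ 2 = 1 := sin_sq_add_cos_sq φ
    have p2 : sin ψ ^ 2 + cos ψ ^ 2 = 1 := sin_sq_add_cos_sq ψ
    exact sq_neg_one (by linear_combination htr)
      (by linear_combination (cos ψ^2 + y*y⁻¹*sin ψ^2) * p1 + p2 + sin ψ^2 * hz)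
  -- the witness
  set w : G2 := rotU (π/2) * (T * rotU (-(π/2)) * T⁻¹) with hwdef
  have hwval : w.val = !![y⁻¹,0;0,y] := by
    rw [hwdef, hTdef]
    exact w_val y hy0
  have hwn : ∀ n : ℕ, 0 < n → w^n ∉ Subgroup.center G2 := by
    intro n hn hmem
    have hcomm := Subgroup.mem_center_iff.mp hmem SU
    have hval := congrArg Units.val hcomm
    rw [Units.val_mul, Units.val_mul, Units.val_pow_eq_pow_val, hwval, diag_pow2] at hval
    have hent := congrFun (congrFun hval 0) 1
    simp [SU, Matrix.mul_apply, Fin.sum_univ_two, inv_pow] at hent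
    have hyn : 1 < y^n := one_lt_pow₀ hy1 hn.ne'
    have hlt1 : (y^n)⁻¹ < 1 := inv_lt_one_of_one_lt₀ hyn
    first
    | linarith [hent]
    | linarith [hent.symm]
  -- pass to the quotient
  refine ⟨G2 ⧸ Subgroup.center G2, inferInstance, ?_⟩
  set pr : G2 →* G2 ⧸ Subgroup.center G2 := QuotientGroup.mk' _ with hprdef
  have hprone : ∀ v : G2, v ∈ Subgroup.center G2 → pr v = 1 := by
    intro v hv
    rwa [hprdef, QuotientGroup.mk'_apply, QuotientGroup.eq_one_iff]
  have hprw : ∀ v : G2, pr v = 1 → v ∈ Subgroup.center G2 := by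
    intro v hv
    rwa [hprdef, QuotientGroup.mk'_apply, QuotientGroup.eq_one_iff] at hv
  have hXY1 : (pr AU * pr Bu)^P1 = 1 := by
    rw [← _root_.map_mul, hAB, ← _root_.map_pow, rot_pow, show (P1:ℝ) * φ = π by rw [hφdef]; field_simp,
      rot_pi]
    exact hprone _ neg_one_mem_center
  have hXZ1 : (pr AU * pr Cu)^P2 = 1 := by
    rw [← _root_.map_mul, hAC, ← _root_.map_pow, conj_pow, rot_pow,
      show (P2:ℝ) * (-ψ) = -π by rw [hψdef]; field_simp; try ring
      , rot_neg_pi,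
      show T * (-1) * T⁻¹ = (-1 : G2) by simp]
    exact hprone _ neg_one_mem_center
  have hYZ2 : (pr Bu * pr Cu) * (pr Bu * pr Cu) = 1 := by
    have h' : pr ((Bu*Cu)^2) = 1 := by rw [hBC2]; exact hprone _ neg_one_mem_center
    rw [_root_.map_pow, pow_two, _root_.map_mul] at h'
    exact h'
  have he1' : (pr AU * pr Bu)^k1 = pr (rotU (π/2)) := by
    rw [← _root_.map_mul, hAB, ← _root_.map_pow, rot_pow]
    congr 1
    congr 1
    rw [hφdef, hk1R]
    field_simp
  have he2' : (pr AU * pr Cu)^k2 = pr (T * rotU (-(π/2)) * T⁻¹) := by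
    have harg : (k2:ℝ) * (-ψ) = -(π/2) := by
      rw [hψdef, hk2R]; field_simp
    rw [← _root_.map_mul, hAC, ← _root_.map_pow, conj_pow, rot_pow, harg]
  have hgw : pr w = (pr AU * pr Bu)^k1 * (pr AU * pr Cu)^k2 := by
    rw [he1', he2', ← _root_.map_mul, hwdef]
  refine ⟨pr AU, pr Bu, pr Cu, pr w, ?_, ?_, ?_, hXY1, hXZ1, ?_, ?_, ?_⟩
  · rw [← _root_.map_mul, AU_sq, _root_.map_one]
  · rw [← _root_.map_mul, hBB, _root_.map_one]
  · rw [← _root_.map_mul, hCC, _root_.map_one]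
  · exact invol_pow hYZ2 hr
  · rw [hgw]
    have hX : pr AU ∈ Subgroup.closure {pr AU, pr Bu, pr Cu} :=
      Subgroup.subset_closure (by simp)
    have hY : pr Bu ∈ Subgroup.closure {pr AU, pr Bu, pr Cu} :=
      Subgroup.subset_closure (by simp)
    have hZ : pr Cu ∈ Subgroup.closure {pr AU, pr Bu, pr Cu} :=
      Subgroup.subset_closure (by simp)
    exact mul_mem (pow_mem (mul_mem hX hY) _) (pow_mem (mul_mem hX hZ) _)
  · rw [isOfFinOrder_iff_pow_eq_one]
    rintro ⟨n, hn, hone⟩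
    rw [← _root_.map_pow] at hone
    exact hwn n hn (hprw _ hone)


end
end St6

lemma inv_sum_lt (a b : ℕ) (ha : 4 ≤ a) (hb : 4 ≤ b) (h : 6 ≤ a ∨ 6 ≤ b) :
    (a:ℝ)⁻¹ + (b:ℝ)⁻¹ < 2⁻¹ := by
  have ha' : (4:ℝ) ≤ (a:ℝ) := by exact_mod_cast ha
  have hb' : (4:ℝ) ≤ (b:ℝ) := by exact_mod_cast hb
  have ha0 : (0:ℝ) < a := by linarith
  have hb0 : (0:ℝ) < b := by linarith
  have h4a : (a:ℝ)⁻¹ ≤ (4:ℝ)⁻¹ := by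
    apply inv_anti₀ (by norm_num) ha'
  have h4b : (b:ℝ)⁻¹ ≤ (4:ℝ)⁻¹ := by
    apply inv_anti₀ (by norm_num) hb'
  rcases h with h6 | h6
  · have h6' : (6:ℝ) ≤ (a:ℝ) := by exact_mod_cast h6
    have : (a:ℝ)⁻¹ ≤ (6:ℝ)⁻¹ := by apply inv_anti₀ (by norm_num) h6'
    have e1 : ((6:ℝ))⁻¹ + ((4:ℝ))⁻¹ < 2⁻¹ := by norm_num
    linarith
  · have h6' : (6:ℝ) ≤ (b:ℝ) := by exact_mod_cast h6
    have : (b:ℝ)⁻¹ ≤ (6:ℝ)⁻¹ := by apply inv_anti₀ (by norm_num) h6'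
    have e1 : ((4:ℝ))⁻¹ + ((6:ℝ))⁻¹ < 2⁻¹ := by norm_num
    linarith

/-- Main auxiliary result: if `{s,t,u}` lies in a spherical set, the system is even, and
`4 ≤ M s t`, then `M s u = 2`. -/
lemma main_aux {B W : Type*} [Group W] {M : CoxeterMatrix B} (cs : CoxeterSystem M W)
    (heven : M.IsEven) {T : Set B} (hT : cs.IsSpherical T) {s t u : B}
    (hsT : s ∈ T) (htT : t ∈ T) (huT : u ∈ T)
    (hst : s ≠ t) (hsu : s ≠ u) (htu : t ≠ u)
    (hP4 : 4 ≤ M s t) (hPe : Even (M s t)) : M s u = 2 := by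
  by_contra hq2
  have hEtu : Even (M t u) := by
    rcases heven t u htu with h | h
    · rw [h]; exact Even.zero
    · exact h
  rcases eq_or_ne (M s u) 0 with hq0 | hq0
  · obtain ⟨G, _, X, Y, Z, g, hX, hY, hZ, hXY, hXZ, hYZ, hmem, hg⟩ :=
      St6.dihedral (M s t) (M t u) hPe hEtu
    refine no_triangle cs heven hT hsT htT huT hst hsu htu X Y Z g hX hY hZ hXY ?_ hYZ hmem hg
    rw [hq0]; exact hXZ
  · have hEq : Even (M s u) := (heven s u hsu).resolve_left hq0
    have hq4 : 4 ≤ M s u := by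
      obtain ⟨k, hk⟩ := hEq
      omega
    by_cases hdiv : 4 ∣ M s t ∧ 4 ∣ M s u
    · obtain ⟨G, _, X, Y, Z, g, hX, hY, hZ, hXY, hXZ, hYZ, hmem, hg⟩ :=
        St6.euclid (M s t) (M s u) (M t u) hdiv.1 hdiv.2 hEtu
      exact no_triangle cs heven hT hsT htT huT hst hsu htu X Y Z g hX hY hZ hXY hXZ hYZ hmem hg
    · have h6 : 6 ≤ M s t ∨ 6 ≤ M s u := by
        obtain ⟨k1, hk1⟩ := hPe
        obtain ⟨k2, hk2⟩ := hEq
        rcases Classical.em (4 ∣ M s t) with h4 | h4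
        · right
          have : ¬ 4 ∣ M s u := fun hc => hdiv ⟨h4, hc⟩
          omega
        · left; omega
      obtain ⟨G, _, X, Y, Z, g, hX, hY, hZ, hXY, hXZ, hYZ, hmem, hg⟩ :=
        St6.hyper (M s t) (M s u) (M t u) hP4 hq4 hPe hEq hEtu
          (inv_sum_lt _ _ hP4 hq4 h6)
      exact no_triangle cs heven hT hsT htT huT hst hsu htu X Y Z g hX hY hZ hXY hXZ hYZ hmem hg

/-- Corollary 3.2: even system with flag nerve, `2 < m_{st} < ∞`,
`T` spherical with `{s,t} ⊆ T`.  Then every `u ∈ T ∖ {s,t}` commutes with both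
`s` and `t`. -/
theorem statement6 {B W : Type*} [Group W] {M : CoxeterMatrix B}
    (cs : CoxeterSystem M W) (heven : M.IsEven) (hflag : cs.HasFlagNerve)
    (t s : B) (hst : 2 < M s t)
    (T : Set B) (hT : cs.IsSpherical T) (hsT : s ∈ T) (htT : t ∈ T) :
    ∀ u ∈ T, u ≠ s → u ≠ t → M u t = 2 ∧ M u s = 2 := by
  intro u huT hus hut
  have hst' : s ≠ t := by
    rintro rfl
    rw [M.diagonal] at hst
    omega
  have hPne : M s t ≠ 0 := by omega
  have hPe : Even (M s t) := (heven s t hst').resolve_left hPne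
  have hP4 : 4 ≤ M s t := by
    obtain ⟨k, hk⟩ := hPe
    omega
  constructor
  · -- M u t = 2, via big edge (t, s)
    have hPe' : Even (M t s) := by rwa [M.symmetric t s]
    have hP4' : 4 ≤ M t s := by rwa [M.symmetric t s]
    have := main_aux cs heven hT htT hsT huT (Ne.symm hst') (Ne.symm hut) (Ne.symm hus) hP4' hPe'
    rwa [M.symmetric u t]
  · -- M u s = 2, via big edge (s, t)
    have := main_aux cs heven hT hsT htT huT hst' (Ne.symm hus) (Ne.symm hut) hP4 hPe
    rwa [M.symmetric u s]
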